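/- arXiv:1308.0002 — 3 statements merged into one kernel-verified Lean document; each statement's English description precedes it below -/
import Mathlib

section
/- Suppose P > 0 solves the discrete algebraic Riccati equation P = A^TPA − A^TPB(B^TPB)^{-1}B^TPA + Q and K := −(B^TPB)^{-1}B^TPA. Then for every x ∈ ℝ^n the least-squares minimizer of u ↦ ‖Gu − Hx‖₂² is given explicitly by the LQ feedback sequence u*(x) = [Kx; K(A+BK)x; …; K(A+BK)^{N−1}x] ∈ ℝ^N. -/
open Matrix Filter Topology

noncomputable section

/-- The block lower-triangular matrix `Φ ∈ ℝ^{nN×N}` whose (i,j)-th `n×1` block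
(0-indexed) is `A^{i-j}B` for `i ≥ j` and `0` otherwise. -/
def Phi (n N : ℕ) (A : Matrix (Fin n) (Fin n) ℝ) (B : Fin n → ℝ) :
    Matrix (Fin N × Fin n) (Fin N) ℝ :=
  Matrix.of fun p j =>
    if (j : ℕ) ≤ (p.1 : ℕ) then ((A ^ ((p.1 : ℕ) - (j : ℕ))) *ᵥ B) p.2 else 0

/-- `Φ_i ∈ ℝ^{n×N}`, the (i+1)-th row block of `Φ`,
i.e. `Φ_i = [A^i B, A^{i-1} B, …, B, 0, …, 0]`. -/
def PhiBlock (n N : ℕ) (A : Matrix (Fin n) (Fin n) ℝ) (B : Fin n → ℝ) (i : Fin N) :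
    Matrix (Fin n) (Fin N) ℝ :=
  Matrix.of fun r j => Phi n N A B (i, r) j

/-- `Υ := [A; A²; …; A^N] ∈ ℝ^{nN×n}`. -/
def Upsilon (n N : ℕ) (A : Matrix (Fin n) (Fin n) ℝ) :
    Matrix (Fin N × Fin n) (Fin n) ℝ :=
  Matrix.of fun p s => (A ^ ((p.1 : ℕ) + 1)) p.2 s

/-- `Q̄ := blockdiag(Q, …, Q, P)` with `N−1` copies of `Q` followed by `P`. -/
def Qbar (n N : ℕ) (Q P : Matrix (Fin n) (Fin n) ℝ) :
    Matrix (Fin N × Fin n) (Fin N × Fin n) ℝ :=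
  Matrix.of fun p q =>
    if p.1 = q.1 then (if (p.1 : ℕ) = N - 1 then P else Q) p.2 q.2 else 0

/-- The cost `u ↦ ‖Gu − Hx‖₂²`. -/
def Jcost {n N : ℕ} (G : Matrix (Fin N × Fin n) (Fin N) ℝ)
    (H : Matrix (Fin N × Fin n) (Fin n) ℝ) (x : Fin n → ℝ) (u : Fin N → ℝ) : ℝ :=
  (G *ᵥ u - H *ᵥ x) ⬝ᵥ (G *ᵥ u - H *ᵥ x)

/-- The feasible set `F_W(x) := {u ∈ ℝ^N : ‖Gu − Hx‖₂² ≤ xᵀWx}`. -/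
def Feas {n N : ℕ} (G : Matrix (Fin N × Fin n) (Fin N) ℝ)
    (H : Matrix (Fin N × Fin n) (Fin n) ℝ) (W : Matrix (Fin n) (Fin n) ℝ)
    (x : Fin n → ℝ) : Set (Fin N → ℝ) :=
  {u | Jcost G H x u ≤ x ⬝ᵥ (W *ᵥ x)}

/-- The least-squares solution `u*(x) := (GᵀG)⁻¹GᵀHx`. -/
def uStar {n N : ℕ} (G : Matrix (Fin N × Fin n) (Fin N) ℝ)
    (H : Matrix (Fin N × Fin n) (Fin n) ℝ) (x : Fin n → ℝ) : Fin N → ℝ :=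
  ((Gᵀ * G)⁻¹ * Gᵀ * H) *ᵥ x

/-- The LQ gain (row vector) `K := −(BᵀPB)⁻¹BᵀPA`. -/
def Kgain {n : ℕ} (A P : Matrix (Fin n) (Fin n) ℝ) (B : Fin n → ℝ) : Fin n → ℝ :=
  -((B ⬝ᵥ (P *ᵥ B))⁻¹ • Matrix.vecMul B (P * A))

/-- The closed-loop matrix `A + BK`. -/
def Acl {n : ℕ} (A P : Matrix (Fin n) (Fin n) ℝ) (B : Fin n → ℝ) :
    Matrix (Fin n) (Fin n) ℝ :=
  A + Matrix.vecMulVec B (Kgain A P B)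

/-- The discrete algebraic Riccati equation
`P = AᵀPA − AᵀPB(BᵀPB)⁻¹BᵀPA + Q`. -/
def Riccati {n : ℕ} (A P Q : Matrix (Fin n) (Fin n) ℝ) (B : Fin n → ℝ) : Prop :=
  P = Aᵀ * P * A -
      (B ⬝ᵥ (P *ᵥ B))⁻¹ •
        Matrix.vecMulVec (Aᵀ *ᵥ (P *ᵥ B)) (Matrix.vecMul B (P * A)) + Q

/-- The Lyapunov function `V(x) := xᵀPx`. -/
def Vfun {n : ℕ} (P : Matrix (Fin n) (Fin n) ℝ) (x : Fin n → ℝ) : ℝ :=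
  x ⬝ᵥ (P *ᵥ x)

/-- `c₁ := max_{i=0,…,N−1} λ_max(Φᵢᵀ P Φᵢ (GᵀG)⁻¹)`. -/
def c1const (n N : ℕ) (A P : Matrix (Fin n) (Fin n) ℝ) (B : Fin n → ℝ)
    (G : Matrix (Fin N × Fin n) (Fin N) ℝ) : ℝ :=
  ⨆ i : Fin N,
    sSup (spectrum ℝ ((PhiBlock n N A B i)ᵀ * P * PhiBlock n N A B i * (Gᵀ * G)⁻¹))

/-- `ρ := 1 − λ_min(QP⁻¹)`. -/
def rhoConst {n : ℕ} (Q P : Matrix (Fin n) (Fin n) ℝ) : ℝ :=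
  1 - sInf (spectrum ℝ (Q * P⁻¹))

/-- `c := (1−ρ)⁻¹(1−ρ^N)c₁`. -/
def cConst (n N : ℕ) (A P Q : Matrix (Fin n) (Fin n) ℝ) (B : Fin n → ℝ)
    (G : Matrix (Fin N × Fin n) (Fin N) ℝ) : ℝ :=
  (1 - rhoConst Q P)⁻¹ * (1 - rhoConst Q P ^ N) * c1const n N A P B G

/-- `w_i := ε_i − K Σ_{l=0}^{i−1} A^{i−1−l} B ε_l`. -/
def wErr {n N : ℕ} (A P : Matrix (Fin n) (Fin n) ℝ) (B : Fin n → ℝ)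
    (ε : Fin N → ℝ) (i : Fin N) : ℝ :=
  ε i - Kgain A P B ⬝ᵥ
    (∑ l ∈ Finset.univ.filter (fun l : Fin N => (l : ℕ) < (i : ℕ)),
      ε l • ((A ^ ((i : ℕ) - 1 - (l : ℕ))) *ᵥ B))

/-- The controllability matrix `[B, AB, …, A^{n−1}B]`. -/
def Ctrb {n : ℕ} (A : Matrix (Fin n) (Fin n) ℝ) (B : Fin n → ℝ) :
    Matrix (Fin n) (Fin n) ℝ :=
  Matrix.of fun r j => ((A ^ (j : ℕ)) *ᵥ B) r


namespace LQAux
open Matrix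

variable {n : ℕ}

lemma mul_vecMulVec' (M : Matrix (Fin n) (Fin n) ℝ) (w v : Fin n → ℝ) :
    M * Matrix.vecMulVec w v = Matrix.vecMulVec (M *ᵥ w) v := by
  ext i j
  simp only [Matrix.mul_apply, Matrix.vecMulVec_apply, Matrix.mulVec, dotProduct]
  rw [Finset.sum_mul]
  exact Finset.sum_congr rfl fun k _ => by ring

lemma vecMul_vecMulVec' (u w v : Fin n → ℝ) :
    Matrix.vecMul u (Matrix.vecMulVec w v) = (u ⬝ᵥ w) • v := by
  ext j
  simp only [Matrix.vecMul, dotProduct, Matrix.vecMulVec_apply, Pi.smul_apply,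
    smul_eq_mul]
  rw [Finset.sum_mul]
  exact Finset.sum_congr rfl fun k _ => by ring

lemma vecMulVec_mulVec' (w v y : Fin n → ℝ) :
    Matrix.vecMulVec w v *ᵥ y = (v ⬝ᵥ y) • w := by
  ext i
  simp only [Matrix.mulVec, dotProduct, Matrix.vecMulVec_apply, Pi.smul_apply,
    smul_eq_mul]
  rw [Finset.sum_mul]
  exact Finset.sum_congr rfl fun k _ => by ring

lemma vecMulVec_neg_smul (w v : Fin n → ℝ) (c : ℝ) :
    Matrix.vecMulVec w (-(c • v)) = -(c • Matrix.vecMulVec w v) := by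
  ext i j
  simp [Matrix.vecMulVec_apply]
  ring

lemma BPB_pos {P : Matrix (Fin n) (Fin n) ℝ} (hP : P.PosDef) {B : Fin n → ℝ} (hB : B ≠ 0) :
    0 < B ⬝ᵥ (P *ᵥ B) := by
  have := hP.dotProduct_mulVec_pos hB
  simpa using this

lemma BPAcl {A P : Matrix (Fin n) (Fin n) ℝ} {B : Fin n → ℝ} (hP : P.PosDef) (hB : B ≠ 0) :
    Matrix.vecMul B (P * Acl A P B) = 0 := by
  have hpos := BPB_pos hP hB
  unfold Acl Kgain
  rw [Matrix.mul_add, Matrix.vecMul_add, mul_vecMulVec', vecMul_vecMulVec']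
  rw [smul_neg, smul_smul, mul_inv_cancel₀ hpos.ne', one_smul]
  exact add_neg_cancel _

lemma riccati_key {A P Q : Matrix (Fin n) (Fin n) ℝ} {B : Fin n → ℝ}
    (hRic : Riccati A P Q B) : Q + Aᵀ * P * Acl A P B = P := by
  unfold Acl Kgain
  rw [Matrix.mul_add, mul_vecMulVec', ← Matrix.mulVec_mulVec, vecMulVec_neg_smul]
  conv_rhs => rw [hRic]
  abel

end LQAux
namespace LQAux
open Matrix

variable {n : ℕ}

lemma acl_pow (A P : Matrix (Fin n) (Fin n) ℝ) (B : Fin n → ℝ) (i : ℕ) :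
    Acl A P B ^ (i + 1) = A ^ (i + 1) +
      ∑ j ∈ Finset.range (i + 1),
        A ^ (i - j) * (Matrix.vecMulVec B (Kgain A P B) * Acl A P B ^ j) := by
  induction i with
  | zero =>
    simp only [zero_add, pow_one, Finset.sum_range_one, Nat.sub_zero, pow_zero, one_mul,
      mul_one]
    rfl
  | succ i ih =>
    calc Acl A P B ^ (i + 1 + 1) = Acl A P B * Acl A P B ^ (i + 1) := pow_succ' _ _
      _ = A * Acl A P B ^ (i + 1) +
            Matrix.vecMulVec B (Kgain A P B) * Acl A P B ^ (i + 1) := add_mul _ _ _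
      _ = A * (A ^ (i + 1) + ∑ j ∈ Finset.range (i + 1),
            A ^ (i - j) * (Matrix.vecMulVec B (Kgain A P B) * Acl A P B ^ j)) +
            Matrix.vecMulVec B (Kgain A P B) * Acl A P B ^ (i + 1) := by rw [ih]
      _ = A ^ (i + 1 + 1) + ((∑ j ∈ Finset.range (i + 1),
            A ^ (i + 1 - j) * (Matrix.vecMulVec B (Kgain A P B) * Acl A P B ^ j)) +
            Matrix.vecMulVec B (Kgain A P B) * Acl A P B ^ (i + 1)) := by
          rw [mul_add, Finset.mul_sum, ← pow_succ', add_assoc]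
          congr 2
          refine Finset.sum_congr rfl fun j hj => ?_
          have h4 : i + 1 - j = (i - j) + 1 := by
            have := Finset.mem_range.mp hj; omega
          rw [h4, pow_succ', mul_assoc]
      _ = A ^ (i + 1 + 1) + ∑ j ∈ Finset.range (i + 1 + 1),
            A ^ (i + 1 - j) * (Matrix.vecMulVec B (Kgain A P B) * Acl A P B ^ j) := by
          conv_rhs => rw [Finset.sum_range_succ]
          rw [Nat.sub_self, pow_zero, one_mul]

lemma backward_sum (A P Q : Matrix (Fin n) (Fin n) ℝ) (B : Fin n → ℝ)
    (hkey : Q + Aᵀ * P * Acl A P B = P) (N : ℕ) :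
    ∀ k, k < N →
      ∑ i ∈ Finset.Ico (N - 1 - k) N,
          (Aᵀ) ^ (i - (N - 1 - k)) * ((if i = N - 1 then P else Q) * Acl A P B ^ (i + 1))
        = P * Acl A P B ^ (N - k) := by
  intro k
  induction k with
  | zero =>
    intro hk
    have h1 : Finset.Ico (N - 1 - 0) N = {N - 1} := by
      ext m; simp only [Finset.mem_Ico, Finset.mem_singleton]; omega
    rw [h1, Finset.sum_singleton,
      show N - 1 - (N - 1 - 0) = 0 by omega, pow_zero, one_mul, if_pos rfl,
      show N - 1 + 1 = N - 0 by omega]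
  | succ k ih =>
    intro hk
    have hk' : k < N := by omega
    have hlt : N - 1 - (k + 1) < N := by omega
    rw [Finset.sum_eq_sum_Ico_succ_bot hlt]
    have hne : ¬ (N - 1 - (k + 1) = N - 1) := by omega
    rw [Nat.sub_self, pow_zero, one_mul, if_neg hne]
    have hsucc : N - 1 - (k + 1) + 1 = N - 1 - k := by omega
    have h2 : ∀ i ∈ Finset.Ico (N - 1 - k) N,
        (Aᵀ) ^ (i - (N - 1 - (k + 1))) * ((if i = N - 1 then P else Q) * Acl A P B ^ (i + 1)) =
          Aᵀ * ((Aᵀ) ^ (i - (N - 1 - k)) * ((if i = N - 1 then P else Q) * Acl A P B ^ (i + 1))) := by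
      intro i hi
      have hi' := Finset.mem_Ico.mp hi
      have h4 : i - (N - 1 - (k + 1)) = (i - (N - 1 - k)) + 1 := by omega
      rw [h4, pow_succ', mul_assoc]
    rw [Finset.sum_congr (by rw [hsucc]) h2, ← Finset.mul_sum, ih hk',
      show N - 1 - (k + 1) + 1 = N - (k + 1) by omega,
      show N - k = N - (k + 1) + 1 by omega, pow_succ']
    calc Q * Acl A P B ^ (N - (k + 1)) +
          Aᵀ * (P * (Acl A P B * Acl A P B ^ (N - (k + 1))))
        = (Q + Aᵀ * P * Acl A P B) * Acl A P B ^ (N - (k + 1)) := by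
          rw [add_mul]
          congr 1
          rw [mul_assoc, mul_assoc]
      _ = P * Acl A P B ^ (N - (k + 1)) := by rw [hkey]

end LQAux
namespace LQAux
open Matrix

variable {n : ℕ}

lemma sum_fin_ite_le {M : Type*} [AddCommMonoid M] {N : ℕ} (i : ℕ) (hi : i < N) (f : ℕ → M) :
    (∑ j : Fin N, if (j : ℕ) ≤ i then f (j : ℕ) else 0) = ∑ m ∈ Finset.range (i + 1), f m := by
  rw [Fin.sum_univ_eq_sum_range (fun m => if m ≤ i then f m else 0) N, ← Finset.sum_filter]
  congr 1
  ext m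
  simp only [Finset.mem_filter, Finset.mem_range]
  omega

lemma sum_fin_ite_ge {M : Type*} [AddCommMonoid M] {N : ℕ} (j : ℕ) (f : ℕ → M) :
    (∑ i : Fin N, if j ≤ (i : ℕ) then f (i : ℕ) else 0) = ∑ m ∈ Finset.Ico j N, f m := by
  rw [Fin.sum_univ_eq_sum_range (fun m => if j ≤ m then f m else 0) N, ← Finset.sum_filter]
  congr 1
  ext m
  simp only [Finset.mem_filter, Finset.mem_range, Finset.mem_Ico]
  omega

/-- block structure of `Qbar *ᵥ w`. -/
lemma qbar_mulVec (N : ℕ) (Q P : Matrix (Fin n) (Fin n) ℝ) (w : Fin N × Fin n → ℝ)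
    (i : Fin N) (r : Fin n) :
    (Qbar n N Q P *ᵥ w) (i, r) =
      ((if (i : ℕ) = N - 1 then P else Q) *ᵥ fun r' => w (i, r')) r := by
  simp only [Qbar, Matrix.mulVec, dotProduct, Matrix.of_apply]
  rw [Fintype.sum_prod_type]
  rw [Finset.sum_eq_single i]
  · simp
  · intro b _ hb
    simp [hb.symm]
  · simp

lemma dot_self_pos {m : Type*} [Fintype m] {z : m → ℝ} (hz : z ≠ 0) : 0 < z ⬝ᵥ z := by
  rcases (dotProduct_self_eq_zero (v := z)).not.mpr hz with h
  have hnn : 0 ≤ z ⬝ᵥ z := Finset.sum_nonneg fun i _ => mul_self_nonneg _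
  exact lt_of_le_of_ne hnn (Ne.symm h)

lemma qbar_quad_pos {N : ℕ} {Q P : Matrix (Fin n) (Fin n) ℝ}
    (hQ : Q.PosDef) (hP : P.PosDef) {z : Fin N × Fin n → ℝ} (hz : z ≠ 0) :
    0 < z ⬝ᵥ (Qbar n N Q P *ᵥ z) := by
  have hsum : z ⬝ᵥ (Qbar n N Q P *ᵥ z) =
      ∑ i : Fin N, (fun r => z (i, r)) ⬝ᵥ
        ((if (i : ℕ) = N - 1 then P else Q) *ᵥ fun r => z (i, r)) := by
    rw [dotProduct]
    rw [Fintype.sum_prod_type]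
    refine Finset.sum_congr rfl fun i _ => ?_
    refine Finset.sum_congr rfl fun r _ => ?_
    rw [qbar_mulVec]
  rw [hsum]
  obtain ⟨p, hp⟩ : ∃ p, z p ≠ 0 := Function.ne_iff.mp hz
  have hzi : (fun r => z (p.1, r)) ≠ 0 := by
    intro h
    exact hp (by simpa using congrFun h p.2)
  refine Finset.sum_pos' (fun i _ => ?_) ⟨p.1, Finset.mem_univ _, ?_⟩
  · by_cases hzi0 : (fun r => z (i, r)) = 0
    · simp only [hzi0]
      simp
    · split
      · have := hP.dotProduct_mulVec_pos hzi0; simpa using this.le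
      · have := hQ.dotProduct_mulVec_pos hzi0; simpa using this.le
  · split
    · have := hP.dotProduct_mulVec_pos hzi; simpa using this
    · have := hQ.dotProduct_mulVec_pos hzi; simpa using this

lemma phi_inj {N : ℕ} (A : Matrix (Fin n) (Fin n) ℝ) {B : Fin n → ℝ} (hB : B ≠ 0)
    {y : Fin N → ℝ} (hy : Phi n N A B *ᵥ y = 0) : y = 0 := by
  obtain ⟨r, hr⟩ : ∃ r, B r ≠ 0 := by
    by_contra h
    push_neg at h
    exact hB (funext fun r => h r)
  have main : ∀ m : ℕ, ∀ j : Fin N, (j : ℕ) = m → y j = 0 := by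
    intro m
    induction m using Nat.strong_induction_on with
    | _ m ih =>
      intro j hj
      have h0 := congrFun hy (j, r)
      simp only [Matrix.mulVec, dotProduct, Phi, Matrix.of_apply, Pi.zero_apply] at h0
      rw [Finset.sum_eq_single j] at h0
      · rw [hj, Nat.sub_self] at h0
        simp only [if_pos le_rfl, pow_zero, Matrix.one_apply, ite_mul, one_mul, zero_mul,
          Finset.sum_ite_eq, Finset.mem_univ, if_true] at h0
        rcases mul_eq_zero.mp h0 with h | h
        · exact absurd h hr
        · exact h
      · intro b _ hb
        by_cases hble : (b : ℕ) ≤ (j : ℕ)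
        · have hblt : (b : ℕ) < m := by
            rcases lt_or_eq_of_le hble with h | h
            · omega
            · exact absurd (Fin.ext h) hb
          rw [ih _ hblt b rfl, mul_zero]
        · rw [if_neg hble, zero_mul]
      · simp
  funext j
  exact main (j : ℕ) j rfl

end LQAux
namespace LQAux
open Matrix

variable {n : ℕ}

lemma sum_mulVec {ι m' n' : Type*} [Fintype n'] (s : Finset ι)
    (f : ι → Matrix m' n' ℝ) (x : n' → ℝ) :
    (∑ j ∈ s, f j) *ᵥ x = ∑ j ∈ s, f j *ᵥ x := by
  induction s using Finset.cons_induction with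
  | empty => simp [Matrix.zero_mulVec]
  | cons a s ha ih => rw [Finset.sum_cons, Finset.sum_cons, Matrix.add_mulVec, ih]

lemma dot_sum {ι m' : Type*} [Fintype m'] (s : Finset ι) (v : m' → ℝ) (f : ι → m' → ℝ) :
    v ⬝ᵥ (∑ j ∈ s, f j) = ∑ j ∈ s, v ⬝ᵥ f j := by
  induction s using Finset.cons_induction with
  | empty => simp
  | cons a s ha ih => rw [Finset.sum_cons, Finset.sum_cons, dotProduct_add, ih]

lemma dot_shift {m' : Type*} [Fintype m'] (M : Matrix m' m' ℝ) (B y : m' → ℝ) :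
    (M *ᵥ B) ⬝ᵥ y = B ⬝ᵥ (Mᵀ *ᵥ y) := by
  rw [Matrix.dotProduct_mulVec, Matrix.vecMul_transpose]

end LQAux
/-- If `P > 0` solves the DARE and `K := −(BᵀPB)⁻¹BᵀPA`, then for
every `x` the (unique) least-squares minimizer of `u ↦ ‖Gu − Hx‖₂²` is the LQ
feedback sequence `u*(x) = [Kx; K(A+BK)x; …; K(A+BK)^{N−1}x]`. -/
theorem least_squares_is_lq_feedback {n N : ℕ} (hN : 1 ≤ N)
    (A : Matrix (Fin n) (Fin n) ℝ) (B : Fin n → ℝ) (hB : B ≠ 0)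
    (Q P : Matrix (Fin n) (Fin n) ℝ) (hQ : Q.PosDef) (hP : P.PosDef)
    (hRic : Riccati A P Q B)
    (S : Matrix (Fin N × Fin n) (Fin N × Fin n) ℝ)
    (hS : S.PosSemidef) (hSsq : S * S = Qbar n N Q P)
    (G : Matrix (Fin N × Fin n) (Fin N) ℝ) (hG : G = S * Phi n N A B)
    (H : Matrix (Fin N × Fin n) (Fin n) ℝ) (hH : H = -(S * Upsilon n N A)) :
    ∀ x : Fin n → ℝ,
      ∀ u : Fin N → ℝ,
        u ≠ (fun i : Fin N => Kgain A P B ⬝ᵥ ((Acl A P B) ^ (i : ℕ) *ᵥ x)) →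
        Jcost G H x (fun i : Fin N => Kgain A P B ⬝ᵥ ((Acl A P B) ^ (i : ℕ) *ᵥ x)) <
          Jcost G H x u := by
  intro x u hu
  classical
  set ustar : Fin N → ℝ :=
    fun i : Fin N => Kgain A P B ⬝ᵥ ((Acl A P B) ^ (i : ℕ) *ᵥ x) with hustar
  set w : Fin N × Fin n → ℝ :=
    fun p : Fin N × Fin n => ((Acl A P B ^ ((p.1 : ℕ) + 1)) *ᵥ x) p.2 with hw
  have hSsymm : Sᵀ = S := by
    have h := hS.1
    rwa [Matrix.IsHermitian, Matrix.conjTranspose_eq_transpose_of_trivial] at h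
  have hkey : Q + Aᵀ * P * Acl A P B = P := LQAux.riccati_key hRic
  have hBPA : Matrix.vecMul B (P * Acl A P B) = 0 := LQAux.BPAcl hP hB
  -- the closed-loop trajectory
  have htraj : Phi n N A B *ᵥ ustar + Upsilon n N A *ᵥ x = w := by
    funext p
    obtain ⟨i, r⟩ := p
    have hrhs : w (i, r)
        = ((A ^ ((i : ℕ) + 1)) *ᵥ x) r
          + ∑ m ∈ Finset.range ((i : ℕ) + 1),
              (Kgain A P B ⬝ᵥ (Acl A P B ^ m *ᵥ x)) * ((A ^ ((i : ℕ) - m)) *ᵥ B) r := by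
      show ((Acl A P B ^ ((i : ℕ) + 1)) *ᵥ x) r = _
      rw [LQAux.acl_pow A P B (i : ℕ), Matrix.add_mulVec, Pi.add_apply,
        LQAux.sum_mulVec, Finset.sum_apply]
      congr 1
      refine Finset.sum_congr rfl fun m hm => ?_
      rw [← Matrix.mulVec_mulVec, ← Matrix.mulVec_mulVec, LQAux.vecMulVec_mulVec',
        Matrix.mulVec_smul]
      simp [mul_comm]
    have hl0 : (Phi n N A B *ᵥ ustar) (i, r)
        = ∑ j : Fin N, (if (j : ℕ) ≤ (i : ℕ)
            then ((A ^ ((i : ℕ) - (j : ℕ))) *ᵥ B) r else 0) * ustar j := rfl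
    have hl1 : (Phi n N A B *ᵥ ustar) (i, r)
        = ∑ m ∈ Finset.range ((i : ℕ) + 1),
            ((A ^ ((i : ℕ) - m)) *ᵥ B) r * (Kgain A P B ⬝ᵥ (Acl A P B ^ m *ᵥ x)) := by
      rw [hl0]
      rw [show (∑ j : Fin N, (if (j : ℕ) ≤ (i : ℕ)
            then ((A ^ ((i : ℕ) - (j : ℕ))) *ᵥ B) r else 0) * ustar j)
          = ∑ j : Fin N, (if (j : ℕ) ≤ (i : ℕ)
            then ((A ^ ((i : ℕ) - (j : ℕ))) *ᵥ B) r
              * (Kgain A P B ⬝ᵥ (Acl A P B ^ (j : ℕ) *ᵥ x)) else 0) from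
        Finset.sum_congr rfl fun j _ => by
          by_cases h : (j : ℕ) ≤ (i : ℕ) <;> simp [h, hustar]]
      exact LQAux.sum_fin_ite_le (i : ℕ) i.isLt
        (fun m => ((A ^ ((i : ℕ) - m)) *ᵥ B) r
          * (Kgain A P B ⬝ᵥ (Acl A P B ^ m *ᵥ x)))
    have hups : (Upsilon n N A *ᵥ x) (i, r) = ((A ^ ((i : ℕ) + 1)) *ᵥ x) r := rfl
    rw [Pi.add_apply, hl1, hups, hrhs, add_comm]
    congr 1
    exact Finset.sum_congr rfl fun m _ => mul_comm _ _
  -- normal equations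
  have hveq : G *ᵥ ustar - H *ᵥ x = S *ᵥ w := by
    rw [hG, hH, Matrix.neg_mulVec, sub_neg_eq_add, ← Matrix.mulVec_mulVec,
      ← Matrix.mulVec_mulVec, ← Matrix.mulVec_add, htraj]
  have hnormal : Gᵀ *ᵥ (G *ᵥ ustar - H *ᵥ x) = 0 := by
    rw [hveq, hG, Matrix.transpose_mul, hSsymm, Matrix.mulVec_mulVec, Matrix.mul_assoc, hSsq,
      ← Matrix.mulVec_mulVec]
    funext j
    have step1 : ((Phi n N A B)ᵀ *ᵥ (Qbar n N Q P *ᵥ w)) j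
        = ∑ i : Fin N, if (j : ℕ) ≤ (i : ℕ) then
            ((A ^ ((i : ℕ) - (j : ℕ))) *ᵥ B) ⬝ᵥ
              ((if (i : ℕ) = N - 1 then P else Q) *ᵥ ((Acl A P B ^ ((i : ℕ) + 1)) *ᵥ x))
          else 0 := by
      rw [show ((Phi n N A B)ᵀ *ᵥ (Qbar n N Q P *ᵥ w)) j
          = ∑ p : Fin N × Fin n, Phi n N A B p j * (Qbar n N Q P *ᵥ w) p from rfl]
      rw [Fintype.sum_prod_type]
      refine Finset.sum_congr rfl fun i _ => ?_
      by_cases hji : (j : ℕ) ≤ (i : ℕ)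
      · rw [if_pos hji, dotProduct]
        refine Finset.sum_congr rfl fun r _ => ?_
        rw [LQAux.qbar_mulVec]
        simp only [Phi, Matrix.of_apply, if_pos hji]
        rfl
      · rw [if_neg hji]
        refine Finset.sum_eq_zero fun r _ => ?_
        simp only [Phi, Matrix.of_apply, if_neg hji, zero_mul]
    rw [step1,
      LQAux.sum_fin_ite_ge (j : ℕ)
        (fun m => ((A ^ (m - (j : ℕ))) *ᵥ B) ⬝ᵥ
          ((if m = N - 1 then P else Q) *ᵥ ((Acl A P B ^ (m + 1)) *ᵥ x)))]
    have step2 : ∀ m ∈ Finset.Ico (j : ℕ) N,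
        ((A ^ (m - (j : ℕ))) *ᵥ B) ⬝ᵥ
            ((if m = N - 1 then P else Q) *ᵥ ((Acl A P B ^ (m + 1)) *ᵥ x))
          = B ⬝ᵥ (((Aᵀ) ^ (m - (j : ℕ)) *
              ((if m = N - 1 then P else Q) * Acl A P B ^ (m + 1))) *ᵥ x) := by
      intro m hm
      rw [LQAux.dot_shift, Matrix.transpose_pow, Matrix.mulVec_mulVec,
        Matrix.mulVec_mulVec, mul_assoc]
    rw [Finset.sum_congr rfl step2, ← LQAux.dot_sum, ← LQAux.sum_mulVec]
    have hjlt : (j : ℕ) < N := j.isLt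
    have hk : N - 1 - (j : ℕ) < N := by omega
    have hbs := LQAux.backward_sum A P Q B hkey N (N - 1 - (j : ℕ)) hk
    rw [show N - 1 - (N - 1 - (j : ℕ)) = (j : ℕ) from by omega,
      show N - (N - 1 - (j : ℕ)) = (j : ℕ) + 1 from by omega] at hbs
    rw [hbs, pow_succ', ← mul_assoc, ← Matrix.mulVec_mulVec, Matrix.dotProduct_mulVec,
      hBPA, zero_dotProduct]
    simp
  -- strict positivity of G on nonzero vectors
  have hGy : ∀ y : Fin N → ℝ, y ≠ 0 → 0 < (G *ᵥ y) ⬝ᵥ (G *ᵥ y) := by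
    intro y hy
    have hzne : Phi n N A B *ᵥ y ≠ 0 := fun h => hy (LQAux.phi_inj A hB h)
    have hq : (Phi n N A B *ᵥ y) ⬝ᵥ (Qbar n N Q P *ᵥ (Phi n N A B *ᵥ y))
        = (G *ᵥ y) ⬝ᵥ (G *ᵥ y) := by
      conv_lhs => rw [← hSsq, ← Matrix.mulVec_mulVec, Matrix.dotProduct_mulVec,
        ← Matrix.mulVec_transpose, hSsymm]
      rw [hG, ← Matrix.mulVec_mulVec]
    calc (0 : ℝ) < (Phi n N A B *ᵥ y) ⬝ᵥ (Qbar n N Q P *ᵥ (Phi n N A B *ᵥ y)) :=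
          LQAux.qbar_quad_pos hQ hP hzne
      _ = (G *ᵥ y) ⬝ᵥ (G *ᵥ y) := hq
  -- decomposition of the cost
  have hdiff : Jcost G H x u
      = Jcost G H x ustar + (G *ᵥ (u - ustar)) ⬝ᵥ (G *ᵥ (u - ustar)) := by
    unfold Jcost
    have hsplit : G *ᵥ u - H *ᵥ x = (G *ᵥ ustar - H *ᵥ x) + G *ᵥ (u - ustar) := by
      rw [Matrix.mulVec_sub]
      abel
    have hcross : (G *ᵥ (u - ustar)) ⬝ᵥ (G *ᵥ ustar - H *ᵥ x) = 0 := by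
      rw [dotProduct_comm, Matrix.dotProduct_mulVec, ← Matrix.mulVec_transpose,
        hnormal, zero_dotProduct]
    have hcross2 : (G *ᵥ ustar - H *ᵥ x) ⬝ᵥ (G *ᵥ (u - ustar)) = 0 := by
      rw [dotProduct_comm]
      exact hcross
    rw [hsplit, dotProduct_add, add_dotProduct, add_dotProduct,
      hcross, hcross2]
    ring
  have hpos := hGy (u - ustar) (fun h => hu (by rwa [sub_eq_zero] at h))
  rw [hdiff]
  linarith
end
end

section
/- Suppose P > 0 solves the discrete algebraic Riccati equation with K := −(B^TPB)^{-1}B^TPA. Let u = [u'_0,…,u'_{N−1}]^T ∈ ℝ^N, write u'_i = K(A+BK)^i x + ε_i for i = 0,…,N−1 with ε = [ε_0,…,ε_{N−1}]^T, and let the predicted states be x'_0 = x, x'_{i+1} = Ax'_i + Bu'_i. Then x'_{i+1} = (A+BK)x'_i + Bw_i where w_i := ε_i − K Σ_{l=0}^{i−1} A^{i−1−l}Bε_l, and moreover w_i = (B^TPΦ_i/(B^TPB)) ε, where Φ_i = [A^iB, A^{i−1}B, …, B, 0, …, 0] ∈ ℝ^{n×N} is the (i+1)-th row block of Φ. -/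
open Matrix Filter Topology

noncomputable section

lemma aux_vecMulVec_mulVec {n : ℕ} (w v u : Fin n → ℝ) :
    Matrix.vecMulVec w v *ᵥ u = (v ⬝ᵥ u) • w := by
  funext r
  simp only [Matrix.mulVec, Matrix.vecMulVec, dotProduct, Matrix.of_apply,
    Pi.smul_apply, smul_eq_mul, Finset.sum_mul]
  exact Finset.sum_congr rfl fun j _ => by ring

lemma aux_dot_sum {m ι : Type*} [Fintype m] (s : Finset ι) (v : m → ℝ) (f : ι → m → ℝ) :
    v ⬝ᵥ (∑ i ∈ s, f i) = ∑ i ∈ s, v ⬝ᵥ f i := by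
  simp only [dotProduct, Finset.sum_apply, Finset.mul_sum]
  exact Finset.sum_comm

/-- If `P > 0` solves the DARE, `u'_i = K(A+BK)^i x + ε_i` and
`x'_0 = x`, `x'_{i+1} = Ax'_i + Bu'_i`, then `x'_{i+1} = (A+BK)x'_i + Bw_i`
where `w_i := ε_i − K Σ_{l=0}^{i−1} A^{i−1−l}Bε_l`, and moreover
`w_i = (BᵀPΦ_i/(BᵀPB))ε`. -/
theorem predicted_trajectory_disturbance_form {n N : ℕ} (hN : 1 ≤ N)
    (A : Matrix (Fin n) (Fin n) ℝ) (B : Fin n → ℝ) (hB : B ≠ 0)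
    (Q P : Matrix (Fin n) (Fin n) ℝ) (hQ : Q.PosDef) (hP : P.PosDef)
    (hRic : Riccati A P Q B)
    (x : Fin n → ℝ) (u ε : Fin N → ℝ)
    (hu : ∀ i : Fin N, u i = Kgain A P B ⬝ᵥ ((Acl A P B) ^ (i : ℕ) *ᵥ x) + ε i)
    (xs : ℕ → Fin n → ℝ) (hx0 : xs 0 = x)
    (hstep : ∀ i : Fin N, xs ((i : ℕ) + 1) = A *ᵥ xs i + u i • B) :
    ∀ i : Fin N,
      xs ((i : ℕ) + 1) = Acl A P B *ᵥ xs i + wErr A P B ε i • B ∧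
      wErr A P B ε i =
        (B ⬝ᵥ (P *ᵥ B))⁻¹ * (Matrix.vecMul B (P * PhiBlock n N A B i) ⬝ᵥ ε) := by
  intro i
  have hAclv : ∀ v : Fin n → ℝ,
      Acl A P B *ᵥ v = A *ᵥ v + (Kgain A P B ⬝ᵥ v) • B := by
    intro v
    rw [Acl, Matrix.add_mulVec, aux_vecMulVec_mulVec]
  have key : ∀ m : ℕ, m ≤ N → xs m = (Acl A P B) ^ m *ᵥ x +
      ∑ l : Fin N, (if (l : ℕ) < m then ε l • ((A ^ (m - 1 - (l : ℕ))) *ᵥ B) else 0) := by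
    intro m
    induction m with
    | zero => intro _; simp [hx0]
    | succ m ih =>
      intro hm
      have hmN : m < N := hm
      have hxs := hstep ⟨m, hmN⟩
      rw [show ((⟨m, hmN⟩ : Fin N) : ℕ) = m from rfl] at hxs
      rw [hxs, ih (le_of_lt hmN), hu ⟨m, hmN⟩]
      have hA_sum : A *ᵥ (∑ l : Fin N,
            (if (l : ℕ) < m then ε l • ((A ^ (m - 1 - (l : ℕ))) *ᵥ B) else 0))
          = ∑ l : Fin N, (if (l : ℕ) < m then ε l • ((A ^ (m - (l : ℕ))) *ᵥ B) else 0) := by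
        rw [← Matrix.mulVecLin_apply, map_sum]
        refine Finset.sum_congr rfl fun l _ => ?_
        by_cases hl : (l : ℕ) < m
        · simp only [hl, if_true, Matrix.mulVecLin_apply, Matrix.mulVec_smul,
            Matrix.mulVec_mulVec]
          have he : A * A ^ (m - 1 - (l : ℕ)) = A ^ (m - (l : ℕ)) := by
            rw [← pow_succ']
            congr 1
            omega
          rw [he]
        · simp [hl]
      have hsplit : (∑ l : Fin N,
            (if (l : ℕ) < m + 1 then ε l • ((A ^ (m + 1 - 1 - (l : ℕ))) *ᵥ B) else 0))
          = (∑ l : Fin N, (if (l : ℕ) < m then ε l • ((A ^ (m - (l : ℕ))) *ᵥ B) else 0))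
            + ε ⟨m, hmN⟩ • B := by
        have hterm : ∀ l : Fin N,
            (if (l : ℕ) < m + 1 then ε l • ((A ^ (m + 1 - 1 - (l : ℕ))) *ᵥ B) else 0)
            = (if (l : ℕ) < m then ε l • ((A ^ (m - (l : ℕ))) *ᵥ B) else 0)
              + (if l = ⟨m, hmN⟩ then ε l • B else 0) := by
          intro l
          by_cases h1 : (l : ℕ) < m
          · have h2 : l ≠ ⟨m, hmN⟩ := by
              intro h
              rw [h] at h1
              exact absurd h1 (lt_irrefl m)
            have h3 : (l : ℕ) < m + 1 := Nat.lt_succ_of_lt h1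
            have he : m + 1 - 1 - (l : ℕ) = m - (l : ℕ) := by omega
            rw [if_pos h3, if_pos h1, if_neg h2, he, add_zero]
          · by_cases h2 : l = ⟨m, hmN⟩
            · subst h2
              simp [h1]
            · have h3 : ¬ (l : ℕ) < m + 1 := by
                have : (l : ℕ) ≠ m := fun h => h2 (Fin.ext h)
                omega
              simp [h1, h2, h3]
        rw [Finset.sum_congr rfl fun l _ => hterm l, Finset.sum_add_distrib,
          Finset.sum_ite_eq' Finset.univ ⟨m, hmN⟩ (fun l => ε l • B)]
        simp
      rw [Matrix.mulVec_add, hA_sum, hsplit, pow_succ', ← Matrix.mulVec_mulVec, hAclv,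
        add_smul]
      abel
  have hxi := key (i : ℕ) (le_of_lt i.isLt)
  have hfs : (∑ l ∈ Finset.univ.filter (fun l : Fin N => (l : ℕ) < (i : ℕ)),
        ε l • ((A ^ ((i : ℕ) - 1 - (l : ℕ))) *ᵥ B))
      = ∑ l : Fin N,
        (if (l : ℕ) < (i : ℕ) then ε l • ((A ^ ((i : ℕ) - 1 - (l : ℕ))) *ᵥ B) else 0) :=
    Finset.sum_filter _ _
  constructor
  · have hxs := hstep i
    rw [hxs, hu i, hAclv]
    have hw : Kgain A P B ⬝ᵥ xs (i : ℕ) + wErr A P B ε i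
        = Kgain A P B ⬝ᵥ ((Acl A P B) ^ (i : ℕ) *ᵥ x) + ε i := by
      rw [hxi, dotProduct_add, wErr, hfs]
      ring
    rw [← hw, add_smul, add_assoc]
  · have hc : B ⬝ᵥ (P *ᵥ B) ≠ 0 := by
      have h0 := hP.dotProduct_mulVec_pos hB
      simp only [star_trivial] at h0
      exact ne_of_gt h0
    set c := B ⬝ᵥ (P *ᵥ B) with hcdef
    set T : ℝ := ∑ l : Fin N,
        (if (l : ℕ) < (i : ℕ)
          then (B ⬝ᵥ (P *ᵥ ((A ^ ((i : ℕ) - (l : ℕ))) *ᵥ B))) * ε l else 0) with hT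
    have hLHS : wErr A P B ε i = ε i + c⁻¹ * T := by
      rw [wErr, hfs, aux_dot_sum]
      have hterm : ∀ l : Fin N, Kgain A P B ⬝ᵥ
            (if (l : ℕ) < (i : ℕ) then ε l • ((A ^ ((i : ℕ) - 1 - (l : ℕ))) *ᵥ B) else 0)
          = -(c⁻¹ * (if (l : ℕ) < (i : ℕ)
              then (B ⬝ᵥ (P *ᵥ ((A ^ ((i : ℕ) - (l : ℕ))) *ᵥ B))) * ε l else 0)) := by
        intro l
        by_cases hl : (l : ℕ) < (i : ℕ)
        · rw [if_pos hl, if_pos hl, Kgain, neg_dotProduct, smul_dotProduct,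
            dotProduct_smul, ← Matrix.dotProduct_mulVec, Matrix.mulVec_mulVec,
            Matrix.mulVec_mulVec]
          have he : P * A * A ^ ((i : ℕ) - 1 - (l : ℕ)) = P * A ^ ((i : ℕ) - (l : ℕ)) := by
            rw [mul_assoc, ← pow_succ']
            congr 2
            omega
          rw [he, ← Matrix.mulVec_mulVec]
          simp only [smul_eq_mul]
          ring
        · simp [hl]
      rw [Finset.sum_congr rfl fun l _ => hterm l, Finset.sum_neg_distrib,
        ← Finset.mul_sum, ← hT]
      ring
    have hterm2 : ∀ j : Fin N, Matrix.vecMul B (P * PhiBlock n N A B i) j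
        = if (j : ℕ) ≤ (i : ℕ)
            then B ⬝ᵥ (P *ᵥ ((A ^ ((i : ℕ) - (j : ℕ))) *ᵥ B)) else 0 := by
      intro j
      have hcol : ∀ r : Fin n, (P * PhiBlock n N A B i) r j
          = if (j : ℕ) ≤ (i : ℕ)
              then (P *ᵥ ((A ^ ((i : ℕ) - (j : ℕ))) *ᵥ B)) r else 0 := by
        intro r
        by_cases hj : (j : ℕ) ≤ (i : ℕ)
        · rw [if_pos hj, Matrix.mul_apply, Matrix.mulVec, dotProduct]
          refine Finset.sum_congr rfl fun s _ => ?_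
          simp only [PhiBlock, Phi, Matrix.of_apply]
          rw [if_pos hj]
        · rw [if_neg hj, Matrix.mul_apply]
          apply Finset.sum_eq_zero
          intro s _
          simp only [PhiBlock, Phi, Matrix.of_apply]
          rw [if_neg hj, mul_zero]
      by_cases hj : (j : ℕ) ≤ (i : ℕ)
      · rw [if_pos hj]
        simp only [Matrix.vecMul, dotProduct]
        exact Finset.sum_congr rfl fun r _ => by simp only [hcol r, if_pos hj]
      · rw [if_neg hj]
        simp only [Matrix.vecMul, dotProduct]
        apply Finset.sum_eq_zero
        intro r _
        simp only [hcol r, if_neg hj, mul_zero]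
    have hRHS : Matrix.vecMul B (P * PhiBlock n N A B i) ⬝ᵥ ε = c * ε i + T := by
      have h1 : Matrix.vecMul B (P * PhiBlock n N A B i) ⬝ᵥ ε
          = ∑ j : Fin N, (if (j : ℕ) ≤ (i : ℕ)
              then (B ⬝ᵥ (P *ᵥ ((A ^ ((i : ℕ) - (j : ℕ))) *ᵥ B))) * ε j else 0) := by
        rw [dotProduct]
        refine Finset.sum_congr rfl fun j _ => ?_
        rw [hterm2 j]
        by_cases hj : (j : ℕ) ≤ (i : ℕ) <;> simp [hj]
      have hterm3 : ∀ j : Fin N, (if (j : ℕ) ≤ (i : ℕ)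
            then (B ⬝ᵥ (P *ᵥ ((A ^ ((i : ℕ) - (j : ℕ))) *ᵥ B))) * ε j else 0)
          = (if (j : ℕ) < (i : ℕ)
              then (B ⬝ᵥ (P *ᵥ ((A ^ ((i : ℕ) - (j : ℕ))) *ᵥ B))) * ε j else 0)
            + (if j = i then (B ⬝ᵥ (P *ᵥ ((A ^ ((i : ℕ) - (j : ℕ))) *ᵥ B))) * ε j else 0) := by
        intro j
        by_cases h1 : (j : ℕ) < (i : ℕ)
        · have h2 : j ≠ i := by
            intro h
            rw [h] at h1
            exact absurd h1 (lt_irrefl _)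
          rw [if_pos (le_of_lt h1), if_pos h1, if_neg h2, add_zero]
        · by_cases h2 : j = i
          · subst h2
            rw [if_pos (le_refl _), if_neg h1, if_pos rfl, zero_add]
          · have h3 : ¬ (j : ℕ) ≤ (i : ℕ) := by
              have : (j : ℕ) ≠ (i : ℕ) := fun h => h2 (Fin.ext h)
              omega
            rw [if_neg h3, if_neg h1, if_neg h2, add_zero]
      rw [h1, Finset.sum_congr rfl fun j _ => hterm3 j, Finset.sum_add_distrib,
        Finset.sum_ite_eq' Finset.univ i, ← hT]
      simp only [Finset.mem_univ, if_true, Nat.sub_self, pow_zero, Matrix.one_mulVec]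
      ring
    rw [hLHS, hRHS, mul_add, ← mul_assoc, inv_mul_cancel₀ hc, one_mul]
end
end

section
/- Suppose B ≠ 0, P > 0 solves the discrete algebraic Riccati equation, and ε ∈ ℝ^N satisfies ‖Gε‖₂² ≤ x^Tℰx for a positive semidefinite matrix ℰ. Then for each i = 0,…,N−1, the scalar w_i := (B^TPΦ_i/(B^TPB)) ε satisfies (B^TPB)|w_i|² ≤ c₁ · x^Tℰx, where c₁ := max_{i=0,…,N−1} λ_max(Φ_i^TPΦ_i(G^TG)^{-1}) > 0. -/
open Matrix Filter Topology

noncomputable section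

lemma herm_quadform_le_sSup {N : ℕ} {C : Matrix (Fin N) (Fin N) ℝ}
    (hC : C.IsHermitian) (y : Fin N → ℝ) :
    y ⬝ᵥ (C *ᵥ y) ≤ sSup (spectrum ℝ C) * (y ⬝ᵥ y) := by
  classical
  have hb : BddAbove (spectrum ℝ C) := by
    rw [hC.spectrum_real_eq_range_eigenvalues]; exact (Set.finite_range _).bddAbove
  have hle : ∀ i, hC.eigenvalues i ≤ sSup (spectrum ℝ C) := fun i =>
    le_csSup hb (hC.eigenvalues_mem_spectrum_real i)
  set U : Matrix (Fin N) (Fin N) ℝ := (hC.eigenvectorUnitary : Matrix (Fin N) (Fin N) ℝ) with hU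
  have hstarU : star U = Uᵀ := conjTranspose_eq_transpose_of_trivial U
  have hUU : U * Uᵀ = 1 := by
    rw [← hstarU]; exact (Matrix.mem_unitaryGroup_iff).mp hC.eigenvectorUnitary.2
  have hofReal : (RCLike.ofReal ∘ hC.eigenvalues : Fin N → ℝ) = hC.eigenvalues := by
    funext i; simp
  have hspec := hC.spectral_theorem
  simp only [Unitary.conjStarAlgAut_apply, Unitary.coe_star] at hspec
  rw [← hU, hstarU, hofReal] at hspec
  have h1 : y ⬝ᵥ ((U * diagonal hC.eigenvalues * Uᵀ) *ᵥ y)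
      = (Uᵀ *ᵥ y) ⬝ᵥ (diagonal hC.eigenvalues *ᵥ (Uᵀ *ᵥ y)) := by
    rw [← mulVec_mulVec, ← mulVec_mulVec, dotProduct_mulVec y U, mulVec_transpose]
  have h2 : (Uᵀ *ᵥ y) ⬝ᵥ (Uᵀ *ᵥ y) = y ⬝ᵥ y := by
    rw [dotProduct_mulVec, vecMul_transpose, mulVec_mulVec, hUU, one_mulVec]
  conv_lhs => rw [hspec]
  rw [h1, ← h2]
  simp only [dotProduct, mulVec_diagonal, Finset.mul_sum]
  apply Finset.sum_le_sum
  intro i _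
  have := hle i
  nlinarith [sq_nonneg ((Uᵀ *ᵥ y) i)]

lemma sSup_spectrum_nonneg {N : ℕ} (hN : 1 ≤ N) {C : Matrix (Fin N) (Fin N) ℝ}
    (hC : C.PosSemidef) : 0 ≤ sSup (spectrum ℝ C) := by
  have hb : BddAbove (spectrum ℝ C) := by
    rw [hC.isHermitian.spectrum_real_eq_range_eigenvalues]; exact (Set.finite_range _).bddAbove
  exact le_trans (hC.eigenvalues_nonneg ⟨0, hN⟩)
    (le_csSup hb (hC.isHermitian.eigenvalues_mem_spectrum_real ⟨0, hN⟩))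

lemma sSup_spectrum_pos {N : ℕ} {C : Matrix (Fin N) (Fin N) ℝ}
    (hC : C.PosSemidef) (h0 : C ≠ 0) : 0 < sSup (spectrum ℝ C) := by
  classical
  have hb : BddAbove (spectrum ℝ C) := by
    rw [hC.isHermitian.spectrum_real_eq_range_eigenvalues]; exact (Set.finite_range _).bddAbove
  have hev : ∃ i, hC.isHermitian.eigenvalues i ≠ 0 := by
    by_contra h
    push_neg at h
    apply h0
    have hs := hC.isHermitian.spectral_theorem
    have hz : (RCLike.ofReal ∘ hC.isHermitian.eigenvalues : Fin N → ℝ) = 0 := by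
      funext i; simp [h i]
    have hd0 : diagonal (0 : Fin N → ℝ) = 0 := by
      ext i j; by_cases hij : i = j <;> simp [diagonal, hij]
    rw [hz, hd0, map_zero] at hs
    exact hs
  obtain ⟨i, hi⟩ := hev
  have hpos : 0 < hC.isHermitian.eigenvalues i :=
    lt_of_le_of_ne (hC.eigenvalues_nonneg i) (Ne.symm hi)
  exact lt_of_lt_of_le hpos (le_csSup hb (hC.isHermitian.eigenvalues_mem_spectrum_real i))

lemma phi_mulVec_ne_zero {n N : ℕ} (A : Matrix (Fin n) (Fin n) ℝ) (B : Fin n → ℝ)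
    (hB : B ≠ 0) (u : Fin N → ℝ) (hu : u ≠ 0) : Phi n N A B *ᵥ u ≠ 0 := by
  classical
  have hTne : (Finset.univ.filter (fun j : Fin N => u j ≠ 0)).Nonempty := by
    have : ∃ j, u j ≠ 0 := by
      by_contra h; push_neg at h; exact hu (funext h)
    obtain ⟨j, hj⟩ := this
    exact ⟨j, by simp [hj]⟩
  set j0 := (Finset.univ.filter (fun j : Fin N => u j ≠ 0)).min' hTne with hj0def
  have hj0 : u j0 ≠ 0 := by
    have := Finset.min'_mem _ hTne
    simpa using this
  have hlt : ∀ j : Fin N, j < j0 → u j = 0 := by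
    intro j hj
    by_contra h
    exact absurd (Finset.min'_le _ j (by simp [h])) (not_le.mpr hj)
  obtain ⟨r, hr⟩ : ∃ r, B r ≠ 0 := by
    by_contra h; push_neg at h; exact hB (funext h)
  intro h0
  have hcmp : (Phi n N A B *ᵥ u) (j0, r) = B r * u j0 := by
    show (∑ j, Phi n N A B (j0, r) j * u j) = B r * u j0
    rw [Finset.sum_eq_single j0]
    · simp [Phi]
    · intro j _ hj
      rcases lt_or_gt_of_ne hj with h | h
      · rw [hlt j h, mul_zero]
      · have hnle : ¬ ((j:ℕ) ≤ (j0:ℕ)) := not_le.mpr h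
        simp only [Phi, of_apply]
        rw [if_neg hnle, zero_mul]
    · intro h; exact absurd (Finset.mem_univ j0) h
  rw [h0] at hcmp
  exact (mul_ne_zero hr hj0) hcmp.symm

lemma qbar_posdef {n N : ℕ} (hN : 1 ≤ N) {Q P : Matrix (Fin n) (Fin n) ℝ}
    (hQ : Q.PosDef) (hP : P.PosDef) : (Qbar n N Q P).PosDef := by
  classical
  have hsym : ∀ (M : Matrix (Fin n) (Fin n) ℝ), M.IsHermitian → ∀ a b, M a b = M b a := by
    intro M hM a b
    have := congr_fun (congr_fun hM a) b
    simpa [conjTranspose_apply] using this.symm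
  rw [posDef_iff_dotProduct_mulVec]
  constructor
  · ext p q
    simp only [conjTranspose_apply, star_trivial, Qbar, of_apply]
    by_cases h : q.1 = p.1
    · rw [if_pos h, if_pos h.symm, h]
      by_cases h2 : (p.1 : ℕ) = N - 1
      · rw [if_pos h2]; exact hsym P hP.1 q.2 p.2
      · rw [if_neg h2]; exact hsym Q hQ.1 q.2 p.2
    · rw [if_neg h, if_neg (fun hh => h hh.symm)]
  · intro v hv
    have hkey : dotProduct (star v) (Qbar n N Q P *ᵥ v)
        = ∑ i : Fin N, (fun r => v (i, r)) ⬝ᵥ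
            ((if (i : ℕ) = N - 1 then P else Q) *ᵥ (fun r => v (i, r))) := by
      simp only [star_trivial, dotProduct, mulVec, Qbar, of_apply, Fintype.sum_prod_type]
      refine Finset.sum_congr rfl fun i _ => ?_
      refine Finset.sum_congr rfl fun r _ => ?_
      congr 1
      rw [Finset.sum_comm]
      refine Finset.sum_congr rfl fun x _ => ?_
      rw [Finset.sum_eq_single i (fun j _ hj => by rw [if_neg (Ne.symm hj), zero_mul])
        (fun h => absurd (Finset.mem_univ i) h), if_pos rfl]
    rw [hkey]
    obtain ⟨p0, hp0⟩ : ∃ p, v p ≠ 0 := by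
      by_contra h; push_neg at h; exact hv (funext h)
    have hvne : (fun r => v (p0.1, r)) ≠ 0 := by
      intro h
      exact hp0 (by simpa using congr_fun h p0.2)
    refine Finset.sum_pos' (fun i _ => ?_) ⟨p0.1, Finset.mem_univ _, ?_⟩
    · by_cases h2 : (i : ℕ) = N - 1
      · simpa [h2] using hP.posSemidef.dotProduct_mulVec_nonneg (fun r => v (i, r))
      · simpa [h2] using hQ.posSemidef.dotProduct_mulVec_nonneg (fun r => v (i, r))
    · by_cases h2 : ((p0.1 : ℕ)) = N - 1
      · simpa [h2] using hP.dotProduct_mulVec_pos hvne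
      · simpa [h2] using hQ.dotProduct_mulVec_pos hvne

lemma dot_self_pos {m : Type*} [Fintype m] {v : m → ℝ} (hv : v ≠ 0) : 0 < v ⬝ᵥ v := by
  have h1 : 0 ≤ v ⬝ᵥ v := Finset.sum_nonneg fun i _ => mul_self_nonneg (v i)
  rcases h1.lt_or_eq with h | h
  · exact h
  · exact absurd (dotProduct_self_eq_zero.mp h.symm) hv

/-- If `B ≠ 0`, `P > 0` solves the DARE, and `‖Gε‖₂² ≤ xᵀℰx` for
a psd `ℰ`, then for each `i` the scalar `w_i := (BᵀPΦ_i/(BᵀPB))ε` satisfies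
`(BᵀPB)|w_i|² ≤ c₁ · xᵀℰx`, where
`c₁ := max_i λ_max(Φ_iᵀPΦ_i(GᵀG)⁻¹) > 0`. -/
theorem disturbance_bound {n N : ℕ} (hN : 1 ≤ N)
    (A : Matrix (Fin n) (Fin n) ℝ) (B : Fin n → ℝ) (hB : B ≠ 0)
    (Q P : Matrix (Fin n) (Fin n) ℝ) (hQ : Q.PosDef) (hP : P.PosDef)
    (hRic : Riccati A P Q B)
    (S : Matrix (Fin N × Fin n) (Fin N × Fin n) ℝ)
    (hS : S.PosSemidef) (hSsq : S * S = Qbar n N Q P)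
    (G : Matrix (Fin N × Fin n) (Fin N) ℝ) (hG : G = S * Phi n N A B)
    (E : Matrix (Fin n) (Fin n) ℝ) (hE : E.PosSemidef)
    (x : Fin n → ℝ) (ε : Fin N → ℝ)
    (hGe : (G *ᵥ ε) ⬝ᵥ (G *ᵥ ε) ≤ x ⬝ᵥ (E *ᵥ x)) :
    0 < c1const n N A P B G ∧
      ∀ i : Fin N,
        (B ⬝ᵥ (P *ᵥ B)) *
            ((B ⬝ᵥ (P *ᵥ B))⁻¹ *
              (Matrix.vecMul B (P * PhiBlock n N A B i) ⬝ᵥ ε)) ^ 2 ≤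
          c1const n N A P B G * (x ⬝ᵥ (E *ᵥ x)) := by
  classical
  have hβ : 0 < B ⬝ᵥ (P *ᵥ B) := by
    have := hP.dotProduct_mulVec_pos hB
    simpa using this
  have hβne : B ⬝ᵥ (P *ᵥ B) ≠ 0 := ne_of_gt hβ
  have hPsym : Pᵀ = P := by
    rw [← conjTranspose_eq_transpose_of_trivial]; exact hP.1
  have hPdot : ∀ v w : Fin n → ℝ, v ⬝ᵥ (P *ᵥ w) = w ⬝ᵥ (P *ᵥ v) := by
    intro v w
    conv_lhs => rw [dotProduct_mulVec, ← hPsym, vecMul_transpose, dotProduct_comm]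
  -- Cauchy-Schwarz in the P inner product
  have hCS : ∀ v : Fin n → ℝ,
      (B ⬝ᵥ (P *ᵥ v)) ^ 2 ≤ (B ⬝ᵥ (P *ᵥ B)) * (v ⬝ᵥ (P *ᵥ v)) := by
    intro v
    have h0 := hP.posSemidef.dotProduct_mulVec_nonneg ((B ⬝ᵥ (P *ᵥ B)) • v - (B ⬝ᵥ (P *ᵥ v)) • B)
    have hvb : v ⬝ᵥ (P *ᵥ B) = B ⬝ᵥ (P *ᵥ v) := hPdot v B
    simp only [star_trivial, mulVec_sub, mulVec_smul, dotProduct_sub, sub_dotProduct,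
      dotProduct_smul, smul_dotProduct, smul_eq_mul, hvb] at h0
    nlinarith [h0, hβ, sq_nonneg (B ⬝ᵥ (P *ᵥ v))]
  -- W = GᵀG is positive definite
  have hQb := qbar_posdef (n := n) hN hQ hP
  have hSdet : IsUnit S.det := by
    rw [isUnit_iff_ne_zero]
    intro h
    have h1 : S.det * S.det = (Qbar n N Q P).det := by rw [← det_mul, hSsq]
    rw [h, mul_zero] at h1
    exact (ne_of_gt hQb.det_pos) h1.symm
  have hGinj : ∀ u : Fin N → ℝ, u ≠ 0 → G *ᵥ u ≠ 0 := by
    intro u hu hc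
    rw [hG, ← mulVec_mulVec] at hc
    apply phi_mulVec_ne_zero A B hB u hu
    calc Phi n N A B *ᵥ u = (S⁻¹ * S) *ᵥ (Phi n N A B *ᵥ u) := by
          rw [nonsing_inv_mul S hSdet, one_mulVec]
      _ = S⁻¹ *ᵥ (S *ᵥ (Phi n N A B *ᵥ u)) := (mulVec_mulVec _ _ _).symm
      _ = 0 := by rw [hc, mulVec_zero]
  have hquadG : ∀ u : Fin N → ℝ, u ⬝ᵥ ((Gᵀ * G) *ᵥ u) = (G *ᵥ u) ⬝ᵥ (G *ᵥ u) := by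
    intro u
    rw [← mulVec_mulVec, dotProduct_mulVec, vecMul_transpose]
  have hWpd : (Gᵀ * G).PosDef := by
    rw [posDef_iff_dotProduct_mulVec]
    constructor
    · have := (posSemidef_conjTranspose_mul_self G).1
      rwa [conjTranspose_eq_transpose_of_trivial] at this
    · intro u hu
      have : star u ⬝ᵥ ((Gᵀ * G) *ᵥ u) = (G *ᵥ u) ⬝ᵥ (G *ᵥ u) := by
        rw [star_trivial]; exact hquadG u
      rw [this]
      exact dot_self_pos (hGinj u hu)
  -- square root of W
  have hWpsd := hWpd.posSemidef
  obtain ⟨R, hRpsd, hRR⟩ : ∃ R : Matrix (Fin N) (Fin N) ℝ, R.PosSemidef ∧ R * R = Gᵀ * G := by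
    open scoped MatrixOrder in
    exact ⟨CFC.sqrt (Gᵀ * G), (CFC.sqrt_nonneg _).posSemidef,
      CFC.sqrt_mul_sqrt_self _ hWpsd.nonneg⟩
  have hRsym : Rᵀ = R := by
    rw [← conjTranspose_eq_transpose_of_trivial]; exact hRpsd.1
  have hRdet : IsUnit R.det := by
    rw [isUnit_iff_ne_zero]
    intro h
    have h1 : (Gᵀ * G).det = 0 := by rw [← hRR, det_mul, h, mul_zero]
    exact (ne_of_gt hWpd.det_pos) h1
  have hRunit : IsUnit R := (isUnit_iff_isUnit_det R).mpr hRdet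
  have hRinv_mul : R⁻¹ * R = 1 := nonsing_inv_mul R hRdet
  have hmul_Rinv : R * R⁻¹ = 1 := mul_nonsing_inv R hRdet
  have hRinvsym : (R⁻¹)ᵀ = R⁻¹ := by rw [transpose_nonsing_inv, hRsym]
  have hWinv : (Gᵀ * G)⁻¹ = R⁻¹ * R⁻¹ := by rw [← hRR, Matrix.mul_inv_rev]
  have hRdot : ∀ u w : Fin N → ℝ, u ⬝ᵥ (R *ᵥ w) = (R *ᵥ u) ⬝ᵥ w := by
    intro u w
    rw [dotProduct_mulVec]
    congr 1
    conv_lhs => rw [← hRsym]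
    rw [vecMul_transpose]
  -- per-index objects
  set M : Fin N → Matrix (Fin N) (Fin N) ℝ :=
    fun i => (PhiBlock n N A B i)ᵀ * P * PhiBlock n N A B i with hMdef
  set C : Fin N → Matrix (Fin N) (Fin N) ℝ := fun i => R⁻¹ * M i * R⁻¹ with hCdef
  have hquad : ∀ (i : Fin N) (u : Fin N → ℝ),
      u ⬝ᵥ (M i *ᵥ u) = (PhiBlock n N A B i *ᵥ u) ⬝ᵥ (P *ᵥ (PhiBlock n N A B i *ᵥ u)) := by
    intro i u
    rw [hMdef]
    rw [← mulVec_mulVec, ← mulVec_mulVec, dotProduct_mulVec, vecMul_transpose]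
  have hMpsd : ∀ i, (M i).PosSemidef := by
    intro i
    have := hP.posSemidef.conjTranspose_mul_mul_same (PhiBlock n N A B i)
    rwa [conjTranspose_eq_transpose_of_trivial] at this
  have hCpsd : ∀ i, (C i).PosSemidef := by
    intro i
    have := (hMpsd i).conjTranspose_mul_mul_same R⁻¹
    rwa [conjTranspose_eq_transpose_of_trivial, hRinvsym] at this
  have hMC : ∀ i, M i = R * C i * R := by
    intro i
    have h1 : R * (R⁻¹ * M i * R⁻¹) * R = (R * R⁻¹) * (M i * (R⁻¹ * R)) := by
      simp only [Matrix.mul_assoc]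
    rw [hCdef, h1, hmul_Rinv, hRinv_mul, Matrix.one_mul, Matrix.mul_one]
  have hconj : ∀ i, M i * (Gᵀ * G)⁻¹ = R * C i * R⁻¹ := by
    intro i
    have h1 : R * (R⁻¹ * M i * R⁻¹) * R⁻¹ = (R * R⁻¹) * (M i * (R⁻¹ * R⁻¹)) := by
      simp only [Matrix.mul_assoc]
    rw [hWinv, hCdef, h1, hmul_Rinv, Matrix.one_mul]
  have hspec_eq : ∀ i, spectrum ℝ (M i * (Gᵀ * G)⁻¹) = spectrum ℝ (C i) := by
    intro i
    rw [hconj i]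
    have h1 : (hRunit.unit : Matrix (Fin N) (Fin N) ℝ) = R := hRunit.unit_spec
    have h2 : ((hRunit.unit⁻¹ : (Matrix (Fin N) (Fin N) ℝ)ˣ) : Matrix (Fin N) (Fin N) ℝ)
        = R⁻¹ := by rw [Matrix.coe_units_inv, h1]
    have := spectrum.units_conjugate (R := ℝ) (a := C i) (u := hRunit.unit)
    rwa [h1, h2] at this
  set lam : Fin N → ℝ := fun i => sSup (spectrum ℝ (M i * (Gᵀ * G)⁻¹)) with hlamdef
  have hc1 : c1const n N A P B G = ⨆ i, lam i := rfl
  have hbddlam : BddAbove (Set.range lam) := (Set.finite_range lam).bddAbove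
  have hlam_le : ∀ i, lam i ≤ c1const n N A P B G := by
    intro i; rw [hc1]; exact le_ciSup hbddlam i
  have hlam_eq : ∀ i, lam i = sSup (spectrum ℝ (C i)) := fun i => by
    show sSup (spectrum ℝ (M i * (Gᵀ * G)⁻¹)) = _
    rw [hspec_eq i]
  have hlam_nonneg : ∀ i, 0 ≤ lam i := fun i => by
    rw [hlam_eq i]; exact sSup_spectrum_nonneg hN (hCpsd i)
  have hxEx : 0 ≤ x ⬝ᵥ (E *ᵥ x) := by
    have := hE.dotProduct_mulVec_nonneg x; simpa using this
  have hform : ∀ (i : Fin N),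
      ε ⬝ᵥ (M i *ᵥ ε) = (R *ᵥ ε) ⬝ᵥ (C i *ᵥ (R *ᵥ ε)) := by
    intro i
    conv_lhs => rw [hMC i, ← mulVec_mulVec, ← mulVec_mulVec]
    exact hRdot ε _
  have hWform : ε ⬝ᵥ ((Gᵀ * G) *ᵥ ε) = (R *ᵥ ε) ⬝ᵥ (R *ᵥ ε) := by
    conv_lhs => rw [← hRR, ← mulVec_mulVec]
    exact hRdot ε _
  -- the quadratic-form chain, for every i
  have hchain : ∀ i : Fin N,
      ε ⬝ᵥ (M i *ᵥ ε) ≤ c1const n N A P B G * (x ⬝ᵥ (E *ᵥ x)) := by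
    intro i
    calc ε ⬝ᵥ (M i *ᵥ ε) = (R *ᵥ ε) ⬝ᵥ (C i *ᵥ (R *ᵥ ε)) := hform i
      _ ≤ sSup (spectrum ℝ (C i)) * ((R *ᵥ ε) ⬝ᵥ (R *ᵥ ε)) :=
          herm_quadform_le_sSup (hCpsd i).1 _
      _ = lam i * (ε ⬝ᵥ ((Gᵀ * G) *ᵥ ε)) := by rw [hlam_eq i, hWform]
      _ = lam i * ((G *ᵥ ε) ⬝ᵥ (G *ᵥ ε)) := by rw [hquadG]
      _ ≤ lam i * (x ⬝ᵥ (E *ᵥ x)) := mul_le_mul_of_nonneg_left hGe (hlam_nonneg i)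
      _ ≤ c1const n N A P B G * (x ⬝ᵥ (E *ᵥ x)) :=
          mul_le_mul_of_nonneg_right (hlam_le i) hxEx
  constructor
  · -- positivity of c1
    set i0 : Fin N := ⟨0, hN⟩ with hi0
    have hδ : PhiBlock n N A B i0 *ᵥ Pi.single i0 1 = B := by
      funext r
      rw [mulVec_single]
      show PhiBlock n N A B i0 r i0 * 1 = B r
      simp [PhiBlock, Phi]
    have hM0 : M i0 ≠ 0 := by
      intro h
      have h2 := hquad i0 (Pi.single i0 1)
      rw [h, hδ] at h2
      simp only [zero_mulVec, dotProduct_zero] at h2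
      exact hβne h2.symm
    have hC0 : C i0 ≠ 0 := by
      intro h
      apply hM0
      rw [hMC i0, h, Matrix.mul_zero, Matrix.zero_mul]
    have : 0 < lam i0 := by
      rw [hlam_eq i0]
      exact sSup_spectrum_pos (hCpsd i0) hC0
    exact lt_of_lt_of_le this (hlam_le i0)
  · intro i
    have hs_eq : Matrix.vecMul B (P * PhiBlock n N A B i) ⬝ᵥ ε
        = B ⬝ᵥ (P *ᵥ (PhiBlock n N A B i *ᵥ ε)) := by
      rw [← dotProduct_mulVec, ← mulVec_mulVec]
    rw [hs_eq]
    set v : Fin n → ℝ := PhiBlock n N A B i *ᵥ ε with hv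
    set β : ℝ := B ⬝ᵥ (P *ᵥ B) with hβdef
    have hLHS : β * (β⁻¹ * (B ⬝ᵥ (P *ᵥ v))) ^ 2 = (B ⬝ᵥ (P *ᵥ v)) ^ 2 * β⁻¹ := by
      field_simp
    rw [hLHS]
    have h1 : (B ⬝ᵥ (P *ᵥ v)) ^ 2 * β⁻¹ ≤ v ⬝ᵥ (P *ᵥ v) := by
      calc (B ⬝ᵥ (P *ᵥ v)) ^ 2 * β⁻¹ ≤ (β * (v ⬝ᵥ (P *ᵥ v))) * β⁻¹ :=
            mul_le_mul_of_nonneg_right (hCS v) (inv_nonneg.mpr hβ.le)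
        _ = v ⬝ᵥ (P *ᵥ v) := by field_simp
    have h2 : v ⬝ᵥ (P *ᵥ v) = ε ⬝ᵥ (M i *ᵥ ε) := (hquad i ε).symm
    calc (B ⬝ᵥ (P *ᵥ v)) ^ 2 * β⁻¹ ≤ v ⬝ᵥ (P *ᵥ v) := h1
      _ = ε ⬝ᵥ (M i *ᵥ ε) := h2
      _ ≤ c1const n N A P B G * (x ⬝ᵥ (E *ᵥ x)) := hchain i
end
end
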